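/- Let ε > 0, let H be a finite group acting transitively on a finite set W, and let C ⊆ W be a non-empty subset such that for every h ∈ H, |C △ h·C| ≤ ε·|C|. Then |W ∖ C| ≤ (ε/2)·|W|. In particular, if |C| ≤ |W|/2 then ε ≥ 1. -/

import Mathlib

open scoped Pointwise

namespace Multiway

variable {V : Type*}

/-- The edge boundary `∂A`: the set of edges with one endpoint in `A` and the other in `Vᶜ∖A`. -/
def edgeBdry (G : SimpleGraph V) (A : Set V) : Set (Sym2 V) :=
  {e | e ∈ G.edgeSet ∧ ∃ u v, e = s(u, v) ∧ u ∈ A ∧ v ∉ A}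

/-- The symmetric vertex boundary `δA`: vertices incident to an edge crossing `A`. -/
def vertBdry (G : SimpleGraph V) (A : Set V) : Set V :=
  {x | ∃ y, G.Adj x y ∧ ¬ (x ∈ A ↔ y ∈ A)}

/-- A partition of the vertex set into `n` non-empty pairwise disjoint sets. -/
def IsNPartition (n : ℕ) (A : Fin n → Set V) : Prop :=
  (∀ i, (A i).Nonempty) ∧ (∀ i j, i ≠ j → Disjoint (A i) (A j)) ∧ (⋃ i, A i) = Set.univ

/-- `max_i |∂A_i| / |A_i|`. -/
noncomputable def edgeRatioMax (G : SimpleGraph V) {n : ℕ} (A : Fin n → Set V) : ℝ :=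
  ⨆ i, ((edgeBdry G (A i)).ncard : ℝ) / ((A i).ncard : ℝ)

/-- `max_i |δA_i| / |A_i|`. -/
noncomputable def vertRatioMax (G : SimpleGraph V) {n : ℕ} (A : Fin n → Set V) : ℝ :=
  ⨆ i, ((vertBdry G (A i)).ncard : ℝ) / ((A i).ncard : ℝ)

/-- The `n`-way isoperimetric constant `h_n(Γ)`. -/
noncomputable def multiH (G : SimpleGraph V) (n : ℕ) : ℝ :=
  sInf {r | ∃ A : Fin n → Set V, IsNPartition n A ∧ r = edgeRatioMax G A}

/-- The `n`-way symmetric vertex isoperimetric constant `ι_n(Γ)`. -/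
noncomputable def multiIota (G : SimpleGraph V) (n : ℕ) : ℝ :=
  sInf {r | ∃ A : Fin n → Set V, IsNPartition n A ∧ r = vertRatioMax G A}

/-- A graph is vertex-transitive if its automorphism group acts transitively on vertices. -/
def VertexTransitive (G : SimpleGraph V) : Prop :=
  ∀ u v : V, ∃ φ : G ≃g G, φ u = v


theorem almost_invariant_subset {H W : Type*} [Group H] [Fintype H] [Fintype W]
    [MulAction H W] (htrans : ∀ w w' : W, ∃ h : H, h • w = w')
    (ε : ℝ) (hε : 0 < ε) (C : Set W) (hC : C.Nonempty)
    (hinv : ∀ h : H, ((symmDiff C (h • C)).ncard : ℝ) ≤ ε * C.ncard) :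
    ((Set.univ \ C : Set W).ncard : ℝ) ≤ ε / 2 * Fintype.card W ∧
      ((C.ncard : ℝ) ≤ Fintype.card W / 2 → 1 ≤ ε) := by
  classical
  have hpt : MulAction.IsPretransitive H W := ⟨fun x y => htrans x y⟩
  set m := Fintype.card W with hm
  set k := Fintype.card H with hk
  -- Lemma A : fibers have size k / m
  have lemA : ∀ (c w : W),
      (Finset.univ.filter fun h : H => h • c = w).card * m = k := by
    intro c w
    obtain ⟨h₀, hh₀⟩ := htrans c w
    have hcard : (Finset.univ.filter fun h : H => h • c = w).card
        = (Finset.univ.filter fun g : H => g • c = c).card := by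
      apply Finset.card_bij' (fun g _ => h₀⁻¹ * g) (fun g _ => h₀ * g)
      · intro g hg
        simp only [Finset.mem_filter, Finset.mem_univ, true_and] at hg ⊢
        rw [mul_smul, hg, ← hh₀, inv_smul_smul]
      · intro g hg
        simp only [Finset.mem_filter, Finset.mem_univ, true_and] at hg ⊢
        rw [mul_smul, hg, hh₀]
      · intro g _; simp
      · intro g _; simp
    have hstab : (Finset.univ.filter fun g : H => g • c = c).card
        = Fintype.card (MulAction.stabilizer H c) := by
      rw [Fintype.card_subtype]
      rfl
    have horb : Fintype.card (MulAction.orbit H c) = m := by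
      rw [hm]
      refine Fintype.card_congr (Equiv.subtypeUnivEquiv ?_)
      intro x
      have := MulAction.orbit_eq_univ H c
      rw [this]; trivial
    have := MulAction.card_orbit_mul_card_stabilizer_eq_card_group H c
    rw [horb] at this
    rw [hcard, hstab, hk, ← this, mul_comm]
  set Cf := C.toFinset with hCf
  -- N h as a filter card
  have hN : ∀ h : H, (h • C \ C).ncard = (Cf.filter fun c => h • c ∉ C).card := by
    intro h
    have himg : (fun c => h • c) '' (C \ h⁻¹ • C) = h • C \ C := by
      rw [Set.image_smul, Set.smul_set_sdiff, smul_inv_smul]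
    rw [← himg, Set.ncard_image_of_injective _ (MulAction.injective h),
      Set.ncard_eq_toFinset_card']
    congr 1
    ext c
    simp only [Set.mem_toFinset, Set.mem_diff, Finset.mem_filter,
      Set.mem_smul_set_iff_inv_smul_mem, inv_inv, hCf]
  -- counting identity
  have hsum : (∑ h : H, (Cf.filter fun c => h • c ∉ C).card) * m
      = Cf.card * (Cfᶜ.card * k) := by
    have swap : ∑ h : H, (Cf.filter fun c => h • c ∉ C).card
        = ∑ c ∈ Cf, (Finset.univ.filter fun h : H => h • c ∉ C).card := by
      simp only [Finset.card_filter]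
      exact Finset.sum_comm
    have fib : ∀ c, (Finset.univ.filter fun h : H => h • c ∉ C).card
        = ∑ w ∈ Cfᶜ, (Finset.univ.filter fun h : H => h • c = w).card := by
      intro c
      rw [Finset.card_eq_sum_card_fiberwise (f := fun h : H => h • c) (t := Cfᶜ)
        (fun h hh => by
          simp only [Finset.mem_coe, Finset.mem_filter, Finset.mem_univ, true_and] at hh
          simp [hCf, hh])]
      refine Finset.sum_congr rfl fun w hw => ?_
      congr 1
      ext h
      simp only [Finset.mem_compl, Set.mem_toFinset, hCf] at hw
      simp only [Finset.mem_filter, Finset.mem_univ, true_and]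
      exact ⟨fun h => h.2, fun e => ⟨by rw [e]; exact hw, e⟩⟩
    rw [swap, Finset.sum_mul]
    rw [Finset.sum_congr rfl fun c _ => by
      rw [fib c, Finset.sum_mul, Finset.sum_congr rfl fun w _ => lemA c w,
        Finset.sum_const, smul_eq_mul]]
    rw [Finset.sum_const, smul_eq_mul]
  -- symm diff identity
  have hsymm : ∀ h : H, (symmDiff C (h • C)).ncard
      = (h⁻¹ • C \ C).ncard + (h • C \ C).ncard := by
    intro h
    have h1 : (C \ h • C).ncard = (h⁻¹ • C \ C).ncard := by
      have himg : (fun x => h⁻¹ • x) '' (C \ h • C) = h⁻¹ • C \ C := by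
        rw [Set.image_smul, Set.smul_set_sdiff, inv_smul_smul]
      rw [← himg, Set.ncard_image_of_injective _ (MulAction.injective h⁻¹)]
    rw [Set.symmDiff_def,
      Set.ncard_union_eq disjoint_sdiff_sdiff (Set.toFinite _) (Set.toFinite _), h1]
  -- real-number work
  set N : H → ℝ := fun h => ((h • C \ C).ncard : ℝ) with hNdef
  have hsum2 : ∀ h : H, N h⁻¹ + N h ≤ ε * C.ncard := by
    intro h
    have := hinv h
    rw [hsymm h] at this
    push_cast at this
    exact this
  have hSinv : ∑ h : H, N h⁻¹ = ∑ h : H, N h :=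
    Fintype.sum_equiv (Equiv.inv H) _ _ fun h => rfl
  have hSbound : 2 * ∑ h : H, N h ≤ k * (ε * C.ncard) := by
    calc 2 * ∑ h : H, N h = ∑ h : H, (N h⁻¹ + N h) := by
          rw [Finset.sum_add_distrib, hSinv]; ring
      _ ≤ ∑ _h : H, ε * C.ncard := Finset.sum_le_sum fun h _ => hsum2 h
      _ = k * (ε * C.ncard) := by rw [Finset.sum_const, hk]; simp [mul_comm]
  have hScount : (∑ h : H, N h) * m = (C.ncard : ℝ) * ((Set.univ \ C : Set W).ncard * k) := by
    have hCc : (Set.univ \ C : Set W).ncard = Cfᶜ.card := by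
      rw [Set.ncard_eq_toFinset_card']
      congr 1
      ext x; simp [hCf]
    have hCn : C.ncard = Cf.card := Set.ncard_eq_toFinset_card' C
    have := hsum
    have : ((∑ h : H, (Cf.filter fun c => h • c ∉ C).card : ℕ) : ℝ) * m
        = (Cf.card : ℝ) * (Cfᶜ.card * k) := by exact_mod_cast congrArg (Nat.cast (R := ℝ)) hsum
    rw [hCc, hCn]
    simpa [hNdef, hN] using this
  have hnC : 0 < (C.ncard : ℝ) := by
    have : 0 < C.ncard := (Set.ncard_pos (Set.toFinite C)).mpr hC
    exact_mod_cast this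
  have hkpos : 0 < (k : ℝ) := by exact_mod_cast Fintype.card_pos_iff.mpr inferInstance
  have hmpos : 0 < (m : ℝ) := by
    have : Nonempty W := ⟨hC.choose⟩
    exact_mod_cast Fintype.card_pos
  have key : 2 * ((Set.univ \ C : Set W).ncard : ℝ) ≤ ε * m := by
    have h1 : 2 * ((C.ncard : ℝ) * ((Set.univ \ C : Set W).ncard * k))
        ≤ k * (ε * C.ncard) * m := by
      rw [← hScount]; nlinarith [hSbound]
    have h2 : (C.ncard : ℝ) * k * (2 * ((Set.univ \ C : Set W).ncard : ℝ))
        ≤ (C.ncard : ℝ) * k * (ε * m) := by linear_combination h1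
    exact le_of_mul_le_mul_left h2 (by positivity)
  constructor
  · linarith
  · intro hhalf
    have hcompl : (C.ncard : ℝ) + ((Set.univ \ C : Set W).ncard : ℝ) = m := by
      have h3 := Set.ncard_add_ncard_compl C
      rw [Set.compl_eq_univ_diff, Nat.card_eq_fintype_card] at h3
      exact_mod_cast h3
    nlinarith [key, hcompl, hmpos]


end Multiway
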